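/- Let R = k[[X,Y]]/(XY(X+Y)) with k = Z/2Z and m = (x, y) the maximal ideal. Then no element a ∈ R is an almost reduction of m, i.e., there is no a with a^ℓ ∈ m^ℓ and m^{ℓ+1} = a·m^ℓ for some ℓ ≥ 0. -/

import Mathlib

/-- `J` is an *almost reduction* of `I`. -/
def IsAlmostReduction {R : Type*} [CommRing R] (J I : Ideal R) : Prop :=
  ∃ ℓ : ℕ, J ^ ℓ ≤ I ^ ℓ ∧ I ^ (ℓ + 1) = J * I ^ ℓ

noncomputable section

/-- The formal power series ring `k[[X,Y]]` over `k = ℤ/2ℤ`. -/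
abbrev S : Type := MvPowerSeries (Fin 2) (ZMod 2)

/-- The principal ideal `(XY(X+Y))` of `k[[X,Y]]`. -/
def 𝔟 : Ideal S :=
  Ideal.span {MvPowerSeries.X 0 * MvPowerSeries.X 1 *
    (MvPowerSeries.X 0 + MvPowerSeries.X 1)}

/-- `R = k[[X,Y]]/(XY(X+Y))`. -/
abbrev R : Type := S ⧸ 𝔟

/-- The image `x` of `X` in `R`. -/
def x : R := Ideal.Quotient.mk 𝔟 (MvPowerSeries.X 0)
/-- The image `y` of `Y` in `R`. -/
def y : R := Ideal.Quotient.mk 𝔟 (MvPowerSeries.X 1)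

open Finset

/-- index helper -/
def sIdx (i j : ℕ) : Fin 2 →₀ ℕ := Finsupp.single 0 i + Finsupp.single 1 j

@[simp] lemma sIdx_apply0 (i j : ℕ) : sIdx i j 0 = i := by
  simp [sIdx, Finsupp.single_apply]

@[simp] lemma sIdx_apply1 (i j : ℕ) : sIdx i j 1 = j := by
  simp [sIdx, Finsupp.single_apply]

lemma sIdx_eq (p : Fin 2 →₀ ℕ) : sIdx (p 0) (p 1) = p := by
  ext i
  fin_cases i <;> simp [sIdx, Finsupp.single_apply]

lemma sIdx_inj : Function.Injective (fun ij : ℕ × ℕ => sIdx ij.1 ij.2) := by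
  intro a b h
  have h0 := congrArg (fun p : Fin 2 →₀ ℕ => p 0) h
  have h1 := congrArg (fun p : Fin 2 →₀ ℕ => p 1) h
  simp at h0 h1
  exact Prod.ext h0 h1

/-- all exponent vectors of total degree `n` -/
def D (n : ℕ) : Finset (Fin 2 →₀ ℕ) :=
  (antidiagonal n).map ⟨fun ij => sIdx ij.1 ij.2, sIdx_inj⟩

lemma mem_D {n : ℕ} {p : Fin 2 →₀ ℕ} : p ∈ D n ↔ p 0 + p 1 = n := by
  constructor
  · rintro hp
    rw [D, Finset.mem_map] at hp
    obtain ⟨ij, hij, rfl⟩ := hp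
    simpa using (Finset.HasAntidiagonal.mem_antidiagonal.1 hij)
  · intro h
    rw [D, Finset.mem_map]
    exact ⟨(p 0, p 1), Finset.HasAntidiagonal.mem_antidiagonal.2 h, sIdx_eq p⟩

abbrev K := ZMod 2

/-- evaluation `X 0 ↦ c·T`, `X 1 ↦ d·T` -/
def ev (c d : K) : MvPowerSeries (Fin 2) K →+* PowerSeries K where
  toFun f := PowerSeries.mk fun n =>
    ∑ p ∈ D n, MvPowerSeries.coeff p f * c ^ (p 0) * d ^ (p 1)
  map_one' := by
    ext n
    classical
    simp only [PowerSeries.coeff_mk, MvPowerSeries.coeff_one, ite_mul, one_mul, zero_mul,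
      Finset.sum_ite_eq', mem_D, PowerSeries.coeff_one, Finsupp.coe_zero, Pi.zero_apply,
      pow_zero, mul_one, add_zero]
    by_cases h : n = 0 <;> simp [h, eq_comm]
  map_mul' := by
    intro f g
    ext n
    classical
    simp only [PowerSeries.coeff_mk, PowerSeries.coeff_mul, MvPowerSeries.coeff_mul]
    have lhs :
        ∑ p ∈ D n, (∑ uv ∈ antidiagonal p,
            MvPowerSeries.coeff uv.1 f * MvPowerSeries.coeff uv.2 g) * c ^ p 0 * d ^ p 1
          = ∑ p ∈ D n, ∑ uv ∈ antidiagonal p,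
            MvPowerSeries.coeff uv.1 f * MvPowerSeries.coeff uv.2 g
              * c ^ p 0 * d ^ p 1 :=
      Finset.sum_congr rfl fun p _ => by rw [Finset.sum_mul, Finset.sum_mul]
    have rhs :
        ∑ ab ∈ antidiagonal n,
            (∑ u ∈ D ab.1, MvPowerSeries.coeff u f * c ^ u 0 * d ^ u 1)
              * (∑ v ∈ D ab.2, MvPowerSeries.coeff v g * c ^ v 0 * d ^ v 1)
          = ∑ ab ∈ antidiagonal n, ∑ uv ∈ D ab.1 ×ˢ D ab.2,
            (MvPowerSeries.coeff uv.1 f * c ^ uv.1 0 * d ^ uv.1 1)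
              * (MvPowerSeries.coeff uv.2 g * c ^ uv.2 0 * d ^ uv.2 1) :=
      Finset.sum_congr rfl fun ab _ => by
        rw [Finset.sum_mul_sum, ← Finset.sum_product']
    rw [lhs, rhs, Finset.sum_sigma', Finset.sum_sigma']
    refine Finset.sum_bij'
      (i := fun x _ => ⟨(x.2.1 0 + x.2.1 1, x.2.2 0 + x.2.2 1), x.2⟩)
      (j := fun x _ => ⟨x.2.1 + x.2.2, x.2⟩) ?_ ?_ ?_ ?_ ?_
    · rintro ⟨p, u, v⟩ hx
      simp only [Finset.mem_sigma, mem_D, Finset.HasAntidiagonal.mem_antidiagonal, Finset.mem_product] at hx ⊢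
      obtain ⟨hp, huv⟩ := hx
      have h0 : u 0 + v 0 = p 0 := by rw [← huv]; simp
      have h1 : u 1 + v 1 = p 1 := by rw [← huv]; simp
      exact ⟨by omega, trivial, trivial⟩
    · rintro ⟨⟨a, b⟩, u, v⟩ hx
      simp only [Finset.mem_sigma, mem_D, Finset.HasAntidiagonal.mem_antidiagonal, Finset.mem_product] at hx ⊢
      obtain ⟨hab, hu, hv⟩ := hx
      refine ⟨?_, trivial⟩
      simp only [Finsupp.add_apply]
      omega
    · rintro ⟨p, u, v⟩ hx
      simp only [Finset.mem_sigma, Finset.HasAntidiagonal.mem_antidiagonal] at hx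
      obtain ⟨-, huv⟩ := hx
      subst huv
      rfl
    · rintro ⟨⟨a, b⟩, u, v⟩ hx
      simp only [Finset.mem_sigma, mem_D, Finset.HasAntidiagonal.mem_antidiagonal, Finset.mem_product] at hx
      obtain ⟨-, hu, hv⟩ := hx
      subst hu; subst hv
      rfl
    · rintro ⟨p, u, v⟩ hx
      simp only [Finset.mem_sigma, Finset.HasAntidiagonal.mem_antidiagonal] at hx
      obtain ⟨-, huv⟩ := hx
      subst huv
      simp only [Finsupp.add_apply]
      ring
  map_zero' := by
    ext n
    simp
  map_add' := by
    intro f g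
    ext n
    simp [add_mul, Finset.sum_add_distrib]

lemma coeff_ev (c d : K) (f : MvPowerSeries (Fin 2) K) (n : ℕ) :
    PowerSeries.coeff n (ev c d f)
      = ∑ p ∈ D n, MvPowerSeries.coeff p f * c ^ p 0 * d ^ p 1 := by
  simp [ev, PowerSeries.coeff_mk]

lemma ev_X0 (c d : K) : ev c d (MvPowerSeries.X 0) = PowerSeries.C c * PowerSeries.X := by
  ext n
  classical
  rw [coeff_ev]
  simp only [MvPowerSeries.coeff_X, ite_mul, one_mul, zero_mul, Finset.sum_ite_eq', mem_D,
    PowerSeries.coeff_C_mul, PowerSeries.coeff_X]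
  by_cases h : n = 1 <;> simp [h, Finsupp.single_apply, eq_comm]

lemma ev_X1 (c d : K) : ev c d (MvPowerSeries.X 1) = PowerSeries.C d * PowerSeries.X := by
  ext n
  classical
  rw [coeff_ev]
  simp only [MvPowerSeries.coeff_X, ite_mul, one_mul, zero_mul, Finset.sum_ite_eq', mem_D,
    PowerSeries.coeff_C_mul, PowerSeries.coeff_X]
  by_cases h : n = 1 <;> simp [h, Finsupp.single_apply, eq_comm]

/-- the key DVR-side computation -/
lemma key (φ : R →+* PowerSeries K)
    (hspan : Ideal.span {φ x, φ y} = Ideal.span {(PowerSeries.X : PowerSeries K)})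
    (a : R) (ℓ : ℕ)
    (h : Ideal.span {x, y} ^ (ℓ + 1) = Ideal.span {a} * Ideal.span {x, y} ^ ℓ) :
    PowerSeries.coeff 1 (φ a) = 1 := by
  have hmap := congrArg (Ideal.map φ) h
  rw [Ideal.map_pow, Ideal.map_mul, Ideal.map_pow, Ideal.map_span, Ideal.map_span,
    Set.image_pair, Set.image_singleton, hspan, Ideal.span_singleton_pow,
    Ideal.span_singleton_pow, Ideal.span_singleton_mul_span_singleton] at hmap
  obtain ⟨e, he⟩ := Ideal.span_singleton_eq_span_singleton.1 hmap
  have hXl : (PowerSeries.X : PowerSeries K) ^ ℓ ≠ 0 :=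
    pow_ne_zero _ PowerSeries.X_ne_zero
  have hX : (PowerSeries.X : PowerSeries K) * (e : PowerSeries K) = φ a := by
    apply mul_left_cancel₀ hXl
    calc (PowerSeries.X : PowerSeries K) ^ ℓ * (PowerSeries.X * (e : PowerSeries K))
        = PowerSeries.X ^ (ℓ + 1) * (e : PowerSeries K) := by ring
      _ = φ a * PowerSeries.X ^ ℓ := he
      _ = PowerSeries.X ^ ℓ * φ a := by ring
  have h1 : PowerSeries.coeff 1 (φ a) = PowerSeries.constantCoeff e := by
    rw [← hX, PowerSeries.coeff_succ_X_mul, PowerSeries.coeff_zero_eq_constantCoeff]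
  have hunit : IsUnit (PowerSeries.constantCoeff (e : PowerSeries K)) :=
    IsUnit.map (PowerSeries.constantCoeff) e.isUnit
  have : ∀ c : ZMod 2, IsUnit c → c = 1 := by decide
  rw [h1, this _ hunit]

lemma X_add_X : (PowerSeries.X : PowerSeries K) + PowerSeries.X = 0 := by
  ext n
  rw [map_add, map_zero]
  exact CharTwo.add_self_eq_zero _

lemma span_pair_zero_left {A : Type*} [CommRing A] (u : A) :
    Ideal.span {(0 : A), u} = Ideal.span {u} := by
  rw [Ideal.span_insert, Ideal.span_singleton_eq_bot.2 rfl, bot_sup_eq]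


/-- In `R = k[[X,Y]]/(XY(X+Y))` with `k = ℤ/2ℤ` and `𝔪 = (x,y)`, no element `a ∈ R` gives an
almost reduction `(a)` of `𝔪`: there is no `a` with `a^ℓ ∈ 𝔪^ℓ` and `𝔪^(ℓ+1) = a·𝔪^ℓ`. -/
theorem maximal_ideal_has_no_almost_reduction :
    ¬ ∃ a : R, IsAlmostReduction (Ideal.span {a}) (Ideal.span {x, y}) := by
  rintro ⟨a, ℓ, -, h2⟩
  obtain ⟨A, rfl⟩ := Ideal.Quotient.mk_surjective a
  have hlift : ∀ c d : K, ev c d (MvPowerSeries.X 0 * MvPowerSeries.X 1 *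
      (MvPowerSeries.X 0 + MvPowerSeries.X 1)) = 0 →
      ∀ s ∈ 𝔟, ev c d s = 0 := by
    intro c d h0 s hs
    rw [𝔟] at hs
    obtain ⟨q, hq⟩ := Ideal.mem_span_singleton'.1 hs
    rw [← hq, map_mul, h0, mul_zero]
  have hb10 : ev 1 0 (MvPowerSeries.X 0 * MvPowerSeries.X 1 *
      (MvPowerSeries.X 0 + MvPowerSeries.X 1)) = 0 := by
    rw [map_mul, map_mul, ev_X1]; simp
  have hb01 : ev 0 1 (MvPowerSeries.X 0 * MvPowerSeries.X 1 *
      (MvPowerSeries.X 0 + MvPowerSeries.X 1)) = 0 := by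
    rw [map_mul, map_mul, ev_X0]; simp
  have hb11 : ev 1 1 (MvPowerSeries.X 0 * MvPowerSeries.X 1 *
      (MvPowerSeries.X 0 + MvPowerSeries.X 1)) = 0 := by
    rw [map_mul, map_add, ev_X0, ev_X1]
    simp [X_add_X]
  set φ10 := Ideal.Quotient.lift 𝔟 (ev 1 0) (hlift 1 0 hb10) with hφ10
  set φ01 := Ideal.Quotient.lift 𝔟 (ev 0 1) (hlift 0 1 hb01) with hφ01
  set φ11 := Ideal.Quotient.lift 𝔟 (ev 1 1) (hlift 1 1 hb11) with hφ11
  have e1 : PowerSeries.coeff 1 (ev 1 0 A) = 1 := by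
    have hx : φ10 x = PowerSeries.X := by
      rw [hφ10, x, Ideal.Quotient.lift_mk, ev_X0]; simp
    have hy : φ10 y = 0 := by
      rw [hφ10, y, Ideal.Quotient.lift_mk, ev_X1]; simp
    have hs : Ideal.span {φ10 x, φ10 y} = Ideal.span {(PowerSeries.X : PowerSeries K)} := by
      rw [hx, hy, Set.pair_comm, span_pair_zero_left]
    have := key φ10 hs _ ℓ h2
    rwa [hφ10, Ideal.Quotient.lift_mk] at this
  have e2 : PowerSeries.coeff 1 (ev 0 1 A) = 1 := by
    have hx : φ01 x = 0 := by
      rw [hφ01, x, Ideal.Quotient.lift_mk, ev_X0]; simp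
    have hy : φ01 y = PowerSeries.X := by
      rw [hφ01, y, Ideal.Quotient.lift_mk, ev_X1]; simp
    have hs : Ideal.span {φ01 x, φ01 y} = Ideal.span {(PowerSeries.X : PowerSeries K)} := by
      rw [hx, hy, span_pair_zero_left]
    have := key φ01 hs _ ℓ h2
    rwa [hφ01, Ideal.Quotient.lift_mk] at this
  have e3 : PowerSeries.coeff 1 (ev 1 1 A) = 1 := by
    have hx : φ11 x = PowerSeries.X := by
      rw [hφ11, x, Ideal.Quotient.lift_mk, ev_X0]; simp
    have hy : φ11 y = PowerSeries.X := by
      rw [hφ11, y, Ideal.Quotient.lift_mk, ev_X1]; simp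
    have hs : Ideal.span {φ11 x, φ11 y} = Ideal.span {(PowerSeries.X : PowerSeries K)} := by
      rw [hx, hy, Set.pair_eq_singleton]
    have := key φ11 hs _ ℓ h2
    rwa [hφ11, Ideal.Quotient.lift_mk] at this
  have hadd : PowerSeries.coeff 1 (ev 1 0 A) + PowerSeries.coeff 1 (ev 0 1 A)
      = PowerSeries.coeff 1 (ev 1 1 A) := by
    rw [coeff_ev, coeff_ev, coeff_ev, ← Finset.sum_add_distrib]
    refine Finset.sum_congr rfl fun p hp => ?_
    have hp1 := mem_D.1 hp
    have : p 0 = 0 ∧ p 1 = 1 ∨ p 0 = 1 ∧ p 1 = 0 := by omega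
    rcases this with ⟨h0, h1⟩ | ⟨h0, h1⟩ <;> simp [h0, h1]
  rw [e1, e2, e3] at hadd
  exact absurd hadd (by decide)
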